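/- arXiv:1802.10330 — 3 statements merged into one kernel-verified Lean document; each statement's English description precedes it below -/
import Mathlib

section
/- The function Ψ_F satisfies Ψ_F(0) = 0, is non-decreasing, and is concave on [0,∞). -/
open MeasureTheory Set Filter

private lemma rpow_convex_combo {t u v a b : ℝ} (ht0 : 0 ≤ t)
    (hu : 0 ≤ u) (hv : 0 ≤ v) (ha : 0 ≤ a) (hb : 0 ≤ b) (hab : a + b = 1) :
    t ^ (a * u + b * v) ≤ a * t ^ u + b * t ^ v := by
  rcases ht0.eq_or_lt with h | h
  · subst h
    rcases (add_nonneg (mul_nonneg ha hu) (mul_nonneg hb hv)).eq_or_lt with hw | hw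
    · have h1 : a * u = 0 := by nlinarith [mul_nonneg ha hu, mul_nonneg hb hv]
      have h2 : b * v = 0 := by nlinarith [mul_nonneg ha hu, mul_nonneg hb hv]
      have hau : a * (0:ℝ) ^ u = a := by
        rcases mul_eq_zero.1 h1 with h' | h' <;> simp [h']
      have hbv : b * (0:ℝ) ^ v = b := by
        rcases mul_eq_zero.1 h2 with h' | h' <;> simp [h']
      rw [← hw, Real.rpow_zero, hau, hbv, hab]
    · rw [Real.zero_rpow hw.ne']
      positivity
  · have harg : Real.log t * (a * u + b * v)
        = a * (Real.log t * u) + b * (Real.log t * v) := by ring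
    rw [Real.rpow_def_of_pos h, Real.rpow_def_of_pos h, Real.rpow_def_of_pos h, harg]
    simpa [smul_eq_mul] using
      convexOn_exp.2 (Set.mem_univ (Real.log t * u)) (Set.mem_univ (Real.log t * v)) ha hb hab

/-- For `F` the distribution function of a non-negative random variable with
finite mean, the function `Ψ_F(u) = ∫₀^∞ (1 - F(x)^u) dx` satisfies `Ψ_F(0) = 0`, is
non-decreasing on `[0, ∞)` and concave on `[0, ∞)`. -/
theorem psi_F_zero_monotone_concave
    (F : ℝ → ℝ)
    (hF_mono : Monotone F)
    (hF_rc : ∀ a : ℝ, ContinuousWithinAt F (Ici a) a)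
    (hF_nonneg : ∀ x, 0 ≤ F x)
    (hF_le_one : ∀ x, F x ≤ 1)
    (hF_lim : Tendsto F atTop (nhds 1))
    (hF_mean : IntegrableOn (fun x => 1 - F x) (Ioi 0))
    (Ψ : ℝ → ℝ)
    (hΨ : ∀ u : ℝ, Ψ u = ∫ x in Ioi (0 : ℝ), (1 - F x ^ u)) :
    Ψ 0 = 0 ∧ MonotoneOn Ψ (Ici 0) ∧ ConcaveOn ℝ (Ici 0) Ψ := by
  have hFmeas : Measurable F := hF_mono.measurable
  have hmeas : ∀ u : ℝ, 0 ≤ u → AEStronglyMeasurable (fun x => 1 - F x ^ u)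
      (volume.restrict (Ioi 0)) := fun u hu =>
    (measurable_const.sub ((Real.continuous_rpow_const hu).measurable.comp
      hFmeas)).aestronglyMeasurable
  have hint : ∀ u : ℝ, 0 ≤ u → IntegrableOn (fun x => 1 - F x ^ u) (Ioi 0) := by
    intro u hu
    set n : ℕ := ⌈u⌉₊ + 1 with hn
    have hn1 : (1:ℝ) ≤ (n:ℝ) := by exact_mod_cast Nat.one_le_iff_ne_zero.2 (by omega)
    have hun : u ≤ (n:ℝ) := by
      have := Nat.le_ceil u
      push_cast [hn]
      linarith
    have hbound : ∀ x, ‖1 - F x ^ u‖ ≤ (n:ℝ) * (1 - F x) := by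
      intro x
      have h0 := hF_nonneg x
      have h1 := hF_le_one x
      have hpow0 : 0 ≤ F x ^ u := Real.rpow_nonneg h0 u
      have hpow1 : F x ^ u ≤ 1 := Real.rpow_le_one h0 h1 hu
      rw [Real.norm_eq_abs, abs_of_nonneg (by linarith)]
      rcases h0.eq_or_lt with h | h
      · have : (1:ℝ) ≤ (n:ℝ) * (1 - F x) := by rw [← h]; simpa using hn1
        linarith
      · have h2 : F x ^ (n:ℝ) ≤ F x ^ u := Real.rpow_le_rpow_of_exponent_ge h h1 hun
        have h3 : (1:ℝ) + (n:ℝ) * (F x - 1) ≤ F x ^ n := by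
          have := one_add_mul_le_pow (by linarith : (-2:ℝ) ≤ F x - 1) n
          rwa [show (1:ℝ) + (F x - 1) = F x by ring] at this
        rw [Real.rpow_natCast] at h2
        linarith
    exact Integrable.mono' (hF_mean.const_mul (n:ℝ)) (hmeas u hu) (ae_of_all _ hbound)
  refine ⟨?_, ?_, ?_⟩
  · rw [hΨ 0]
    simp
  · intro u hu v hv huv
    rw [hΨ u, hΨ v]
    refine integral_mono (hint u hu) (hint v hv) fun x => ?_
    have h0 := hF_nonneg x
    have h1 := hF_le_one x
    simp only
    rcases h0.eq_or_lt with h | h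
    · rcases (mem_Ici.1 hu).eq_or_lt with h' | h'
      · rw [← h', Real.rpow_zero]
        have : F x ^ v ≤ 1 := Real.rpow_le_one h0 h1 hv
        linarith
      · rw [← h, Real.zero_rpow h'.ne', Real.zero_rpow (by linarith : v ≠ 0)]
    · have : F x ^ v ≤ F x ^ u := Real.rpow_le_rpow_of_exponent_ge h h1 huv
      linarith
  · refine ⟨convex_Ici 0, fun u hu v hv a b ha hb hab => ?_⟩
    simp only [smul_eq_mul]
    have hu' : (0:ℝ) ≤ u := hu
    have hv' : (0:ℝ) ≤ v := hv
    rw [hΨ u, hΨ v, hΨ (a * u + b * v), ← integral_const_mul, ← integral_const_mul,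
      ← integral_add ((hint u hu').const_mul a) ((hint v hv').const_mul b)]
    refine integral_mono
      (((hint u hu').const_mul a).add ((hint v hv').const_mul b))
      (hint (a * u + b * v) (by positivity)) fun x => ?_
    have key := rpow_convex_combo (hF_nonneg x) hu' hv' ha hb hab
    simp only
    nlinarith [key]
end

section
/- Lévy–Khintchine form of Ψ_F: for every u ≥ 0, ∫₀^∞ (1 − F(x)^u) dx = ∫_{(0,∞]} (1 − e^{−ux}) ν_F(dx), where ν_F is determined by ν_F((t,∞]) = F^{-1}(e^{−t}). -/
open MeasureTheory Set Filter
open scoped ENNReal NNReal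

private lemma lk_expInt {u : ℝ} (hu : 0 < u) {c : ℝ} (hc : 0 ≤ c) :
    ∫⁻ t in Ioo (0:ℝ) c, ENNReal.ofReal (u * Real.exp (-(u*t)))
      = ENNReal.ofReal (1 - Real.exp (-(u*c))) := by
  have hcont : Continuous fun t : ℝ => u * Real.exp (-(u*t)) := by
    exact continuous_const.mul ((continuous_const.mul continuous_id).neg.rexp)
  have hInt : IntegrableOn (fun t : ℝ => u * Real.exp (-(u*t))) (Ioo 0 c) :=
    (hcont.integrableOn_Icc).mono_set Ioo_subset_Icc_self
  rw [← ofReal_integral_eq_lintegral_ofReal hInt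
    (Eventually.of_forall fun t => mul_nonneg hu.le (Real.exp_pos _).le)]
  congr 1
  have h1 : ∫ t in Ioo (0:ℝ) c, u * Real.exp (-(u*t))
      = ∫ t in (0:ℝ)..c, u * Real.exp (-(u*t)) := by
    rw [intervalIntegral.integral_of_le hc, integral_Ioc_eq_integral_Ioo]
  rw [h1]
  have hderiv : ∀ t ∈ uIcc (0:ℝ) c,
      HasDerivAt (fun t : ℝ => -Real.exp (-(u*t))) (u * Real.exp (-(u*t))) t := by
    intro t _
    have h1 : HasDerivAt (fun t : ℝ => -(u*t)) (-u) t := by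
      exact ((hasDerivAt_id t).const_mul u).neg.congr_deriv (by simp)
    have h2 : HasDerivAt (fun t : ℝ => -Real.exp (-(u*t))) (-(Real.exp (-(u*t)) * -u)) t :=
      (h1.exp).neg
    convert h2 using 1
    ring
  rw [intervalIntegral.integral_eq_sub_of_hasDerivAt hderiv (hcont.intervalIntegrable 0 c)]
  simp [Real.exp_zero]
  ring

private lemma lk_expIntIoi {u : ℝ} (hu : 0 < u) :
    ∫⁻ t in Ioi (0:ℝ), ENNReal.ofReal (u * Real.exp (-(u*t))) = 1 := by
  have hInt0 : IntegrableOn (fun x : ℝ => Real.exp (-u * x)) (Ioi 0) :=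
    exp_neg_integrableOn_Ioi 0 hu
  have hInt : IntegrableOn (fun t : ℝ => u * Real.exp (-(u*t))) (Ioi 0) := by
    have := hInt0.const_mul u
    simpa [neg_mul, IntegrableOn] using this
  rw [← ofReal_integral_eq_lintegral_ofReal hInt
    (Eventually.of_forall fun t => mul_nonneg hu.le (Real.exp_pos _).le)]
  have h1 : ∫ t in Ioi (0:ℝ), u * Real.exp (-(u*t))
      = u * ∫ t in Ioi (0:ℝ), Real.exp (-(u*t)) := integral_const_mul u _
  have h2 : ∫ t in Ioi (0:ℝ), Real.exp (-(u*t))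
      = u⁻¹ • ∫ x in Ioi (u*0), Real.exp (-x) :=
    integral_comp_mul_left_Ioi (fun x => Real.exp (-x)) 0 hu
  rw [h1, h2]
  rw [mul_zero, integral_exp_neg_Ioi, neg_zero, Real.exp_zero, smul_eq_mul, mul_one,
    mul_inv_cancel₀ hu.ne', ENNReal.ofReal_one]

private lemma lk_sublevel {F : ℝ → ℝ} (hF_mono : Monotone F)
    (hF_rc : ∀ a : ℝ, ContinuousWithinAt F (Ici a) a)
    (hF_lim : Tendsto F atTop (nhds 1))
    {Finv : ℝ → ℝ} (hFinv : ∀ x, Finv x = sInf {s : ℝ | 0 < s ∧ x ≤ F s})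
    {y : ℝ} (hy0 : 0 < y) (hy1 : y < 1) :
    {x : ℝ | F x < y} ∩ Ioi 0 = Ioo 0 (Finv y) := by
  set S := {s : ℝ | 0 < s ∧ y ≤ F s} with hS
  have hne : S.Nonempty := by
    have h1 : ∀ᶠ s in atTop, y ≤ F s := hF_lim.eventually (eventually_ge_nhds hy1)
    obtain ⟨s, hs1, hs2⟩ := ((eventually_gt_atTop 0).and h1).exists
    exact ⟨s, hs1, hs2⟩
  have hbdd : BddBelow S := ⟨0, fun s hs => hs.1.le⟩
  have hge : ∀ x, Finv y < x → y ≤ F x := by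
    intro x hx
    rw [hFinv] at hx
    obtain ⟨s, hsS, hsx⟩ := (csInf_lt_iff hbdd hne).mp hx
    exact hsS.2.trans (hF_mono hsx.le)
  ext x
  simp only [mem_inter_iff, mem_setOf_eq, mem_Ioi, mem_Ioo]
  constructor
  · rintro ⟨hFx, hx0⟩
    refine ⟨hx0, ?_⟩
    by_contra h
    push_neg at h
    have hyFx : y ≤ F x := by
      have htend : Tendsto F (nhdsWithin x (Ioi x)) (nhds (F x)) :=
        (hF_rc x).mono_left (nhdsWithin_mono x Ioi_subset_Ici_self)
      refine ge_of_tendsto htend ?_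
      filter_upwards [self_mem_nhdsWithin] with s hs
      exact hge s (lt_of_le_of_lt h hs)
    exact absurd hFx (not_lt.mpr hyFx)
  · rintro ⟨hx0, hxlt⟩
    refine ⟨?_, hx0⟩
    by_contra h
    push_neg at h
    have : Finv y ≤ x := by
      rw [hFinv]; exact csInf_le hbdd ⟨hx0, h⟩
    exact absurd hxlt (not_lt.mpr this)

private lemma lk_if_restrict (c : ℝ → ℝ≥0∞) {A : Set ℝ} (hA : MeasurableSet A) :
    (∫⁻ t in Ioi (0:ℝ), A.indicator c t)
      = ∫⁻ t in A ∩ Ioi 0, c t := by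
  rw [lintegral_indicator hA, Measure.restrict_restrict hA]

private lemma lk_lhs_kernel {F : ℝ → ℝ} (hF_nonneg : ∀ x, 0 ≤ F x)
    (hF_le_one : ∀ x, F x ≤ 1) {u : ℝ} (hu : 0 < u) (x : ℝ) :
    ENNReal.ofReal (1 - F x ^ u)
      = ∫⁻ t in Ioi (0:ℝ),
          (if F x < Real.exp (-t) then ENNReal.ofReal (u * Real.exp (-(u*t))) else 0) := by
  rcases eq_or_lt_of_le (hF_nonneg x) with h0 | h0
  · -- F x = 0
    have : ∀ t : ℝ, F x < Real.exp (-t) := fun t => by rw [← h0]; exact Real.exp_pos _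
    simp only [this, if_true]
    rw [lk_expIntIoi hu, ← h0, Real.zero_rpow hu.ne', sub_zero, ENNReal.ofReal_one]
  · -- 0 < F x
    have hA : {t : ℝ | F x < Real.exp (-t)} = Iio (-(Real.log (F x))) := by
      ext t
      simp only [mem_setOf_eq, mem_Iio]
      rw [← Real.log_lt_iff_lt_exp h0]
      constructor <;> intro h <;> linarith
    have hc : 0 ≤ -(Real.log (F x)) := by
      have := Real.log_nonpos (hF_nonneg x) (hF_le_one x)
      linarith
    have hind : (fun t : ℝ => if F x < Real.exp (-t)
          then ENNReal.ofReal (u * Real.exp (-(u*t))) else 0)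
        = {t : ℝ | F x < Real.exp (-t)}.indicator
            (fun t => ENNReal.ofReal (u * Real.exp (-(u*t)))) := by
      ext t
      by_cases h : F x < Real.exp (-t)
      · simp [Set.indicator_apply, Set.mem_setOf_eq, h]
      · simp [Set.indicator_apply, Set.mem_setOf_eq, h]
    rw [hind, lintegral_congr fun t => rfl]
    rw [lk_if_restrict _ (show MeasurableSet {t : ℝ | F x < Real.exp (-t)} by
      rw [hA]; exact measurableSet_Iio), hA]
    have hset : Iio (-(Real.log (F x))) ∩ Ioi 0 = Ioo 0 (-(Real.log (F x))) := by
      ext t; simp only [mem_inter_iff, mem_Iio, mem_Ioi, mem_Ioo]; tauto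
    rw [hset, lk_expInt hu hc]
    congr 2
    rw [Real.rpow_def_of_pos h0]
    ring_nf

private lemma lk_rhs_kernel {u : ℝ} (hu : 0 < u) (s : ℝ≥0∞) :
    (if s = ⊤ then (if u = 0 then (0:ℝ≥0∞) else 1)
        else ENNReal.ofReal (1 - Real.exp (-u * s.toReal)))
      = ∫⁻ t in Ioi (0:ℝ),
          (if ENNReal.ofReal t < s then ENNReal.ofReal (u * Real.exp (-(u*t))) else 0) := by
  rcases eq_or_ne s ⊤ with rfl | hs
  · rw [if_pos rfl, if_neg hu.ne']
    have : ∀ t : ℝ, ENNReal.ofReal t < (⊤ : ℝ≥0∞) := fun t => ENNReal.ofReal_lt_top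
    simp only [this, if_true]
    exact (lk_expIntIoi hu).symm
  · rw [if_neg hs]
    have hAm : MeasurableSet {t : ℝ | ENNReal.ofReal t < s} :=
      measurableSet_lt ENNReal.measurable_ofReal measurable_const
    have hind : (fun t : ℝ => if ENNReal.ofReal t < s
          then ENNReal.ofReal (u * Real.exp (-(u*t))) else 0)
        = {t : ℝ | ENNReal.ofReal t < s}.indicator
            (fun t => ENNReal.ofReal (u * Real.exp (-(u*t)))) := by
      ext t
      by_cases h : ENNReal.ofReal t < s
      · simp [Set.indicator_apply, Set.mem_setOf_eq, h]
      · simp [Set.indicator_apply, Set.mem_setOf_eq, h]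
    rw [hind, lk_if_restrict _ hAm]
    have hset : {t : ℝ | ENNReal.ofReal t < s} ∩ Ioi 0 = Ioo 0 s.toReal := by
      ext t
      simp only [mem_inter_iff, mem_setOf_eq, mem_Ioi, mem_Ioo]
      constructor
      · rintro ⟨h1, h2⟩
        exact ⟨h2, (ENNReal.ofReal_lt_iff_lt_toReal h2.le hs).mp h1⟩
      · rintro ⟨h1, h2⟩
        exact ⟨(ENNReal.ofReal_lt_iff_lt_toReal h1.le hs).mpr h2, h1⟩
    rw [hset, lk_expInt hu ENNReal.toReal_nonneg, neg_mul]

/-- Lévy–Khintchine form of `Ψ_F`: for every `u ≥ 0`,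
`∫₀^∞ (1 − F(x)^u) dx = ∫_{(0,∞]} (1 − e^{−ux}) ν_F(dx)`, where `ν_F` is the measure on
`(0,∞]` determined by `ν_F((t,∞]) = F⁻¹(e^{−t})`, with the convention `e^{−u·∞} = 0`
for `u > 0`. -/
theorem levy_khintchine_psi_F
    (F : ℝ → ℝ)
    (hF_mono : Monotone F)
    (hF_rc : ∀ a : ℝ, ContinuousWithinAt F (Ici a) a)
    (hF_nonneg : ∀ x, 0 ≤ F x)
    (hF_le_one : ∀ x, F x ≤ 1)
    (hF_neg : ∀ x < 0, F x = 0)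
    (hF_lim : Tendsto F atTop (nhds 1))
    (hF_mean : IntegrableOn (fun x => 1 - F x) (Ioi 0))
    (hF_pos : 0 < ∫ x in Ioi (0 : ℝ), (1 - F x))
    (Finv : ℝ → ℝ) (hFinv : ∀ x, Finv x = sInf {s : ℝ | 0 < s ∧ x ≤ F s})
    (ν : Measure ℝ≥0∞)
    (hν0 : ν {0} = 0)
    (hν : ∀ t : ℝ, 0 < t →
      ν {x : ℝ≥0∞ | ENNReal.ofReal t < x} = ENNReal.ofReal (Finv (Real.exp (-t)))) :
    ∀ u : ℝ, 0 ≤ u →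
      ∫⁻ x in Ioi (0 : ℝ), ENNReal.ofReal (1 - F x ^ u)
        = ∫⁻ x, (if x = ⊤ then (if u = 0 then 0 else 1)
            else ENNReal.ofReal (1 - Real.exp (-u * x.toReal))) ∂ν := by
  intro u hu
  rcases hu.eq_or_lt with rfl | hu0
  · simp [Real.rpow_zero]
  haveI : SigmaFinite ν := by
    constructor
    refine ⟨⟨fun n => {0} ∪ {x : ℝ≥0∞ | ENNReal.ofReal (1/(n+1)) < x}, fun _ => trivial,
      ?_, ?_⟩⟩
    · intro n
      apply lt_of_le_of_lt (measure_union_le _ _)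
      rw [hν0, hν (1/(n+1)) (by positivity), zero_add]
      exact ENNReal.ofReal_lt_top
    · ext x
      simp only [mem_iUnion, mem_union, mem_singleton_iff, mem_setOf_eq, mem_univ, iff_true]
      rcases eq_or_ne x 0 with rfl | hx
      · exact ⟨0, Or.inl rfl⟩
      · obtain ⟨n, hn⟩ := ENNReal.exists_inv_nat_lt hx
        refine ⟨n, Or.inr (lt_of_le_of_lt ?_ hn)⟩
        rw [one_div, ENNReal.ofReal_inv_of_pos (by positivity)]
        rw [ENNReal.inv_le_inv]
        have : ENNReal.ofReal ((n:ℝ)+1) = (n : ℝ≥0∞) + 1 := by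
          rw [ENNReal.ofReal_add (by positivity) zero_le_one, ENNReal.ofReal_natCast,
            ENNReal.ofReal_one]
        rw [this]
        exact le_self_add
  have hFmeas : Measurable F := hF_mono.measurable
  have hCcont : Continuous fun t : ℝ => ENNReal.ofReal (u * Real.exp (-(u*t))) :=
    ENNReal.continuous_ofReal.comp
      (continuous_const.mul ((continuous_const.mul continuous_id).neg.rexp))
  have hL : ∫⁻ x in Ioi (0:ℝ), ENNReal.ofReal (1 - F x ^ u)
      = ∫⁻ t in Ioi (0:ℝ), ENNReal.ofReal (u * Real.exp (-(u*t)))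
          * ENNReal.ofReal (Finv (Real.exp (-t))) := by
    calc ∫⁻ x in Ioi (0:ℝ), ENNReal.ofReal (1 - F x ^ u)
        = ∫⁻ x in Ioi (0:ℝ), ∫⁻ t in Ioi (0:ℝ),
            (if F x < Real.exp (-t) then ENNReal.ofReal (u * Real.exp (-(u*t))) else 0) :=
          lintegral_congr fun x => lk_lhs_kernel hF_nonneg hF_le_one hu0 x
      _ = ∫⁻ t in Ioi (0:ℝ), ∫⁻ x in Ioi (0:ℝ),
            (if F x < Real.exp (-t) then ENNReal.ofReal (u * Real.exp (-(u*t))) else 0) := by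
          apply lintegral_lintegral_swap
          apply Measurable.aemeasurable
          have hset : MeasurableSet {p : ℝ × ℝ | F p.1 < Real.exp (-p.2)} :=
            measurableSet_lt (hFmeas.comp measurable_fst)
              ((Real.continuous_exp.comp continuous_neg).measurable.comp measurable_snd)
          exact Measurable.ite hset ((hCcont.measurable).comp measurable_snd) measurable_const
      _ = ∫⁻ t in Ioi (0:ℝ), ENNReal.ofReal (u * Real.exp (-(u*t)))
            * ENNReal.ofReal (Finv (Real.exp (-t))) := by
          refine setLIntegral_congr_fun measurableSet_Ioi (fun t ht => ?_)
          have hy0 : 0 < Real.exp (-t) := Real.exp_pos _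
          have hy1 : Real.exp (-t) < 1 := by
            have h := Real.exp_lt_exp.mpr (neg_lt_zero.mpr ht)
            rwa [Real.exp_zero] at h
          have hAm : MeasurableSet {x : ℝ | F x < Real.exp (-t)} :=
            measurableSet_lt hFmeas measurable_const
          have hind : (fun x : ℝ => if F x < Real.exp (-t)
                then ENNReal.ofReal (u * Real.exp (-(u*t))) else 0)
              = {x : ℝ | F x < Real.exp (-t)}.indicator
                  (fun _ => ENNReal.ofReal (u * Real.exp (-(u*t)))) := by
            ext x; rw [Set.indicator_apply]; rfl
          rw [hind, lintegral_indicator_const hAm, Measure.restrict_apply hAm,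
            lk_sublevel hF_mono hF_rc hF_lim hFinv hy0 hy1, Real.volume_Ioo, sub_zero]
  have hR : (∫⁻ x, (if x = ⊤ then (if u = 0 then 0 else 1)
          else ENNReal.ofReal (1 - Real.exp (-u * x.toReal))) ∂ν)
      = ∫⁻ t in Ioi (0:ℝ), ENNReal.ofReal (u * Real.exp (-(u*t)))
          * ENNReal.ofReal (Finv (Real.exp (-t))) := by
    calc (∫⁻ x, (if x = ⊤ then (if u = 0 then 0 else 1)
            else ENNReal.ofReal (1 - Real.exp (-u * x.toReal))) ∂ν)
        = ∫⁻ s, (∫⁻ t in Ioi (0:ℝ),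
            (if ENNReal.ofReal t < s then ENNReal.ofReal (u * Real.exp (-(u*t))) else 0)) ∂ν :=
          lintegral_congr fun s => lk_rhs_kernel hu0 s
      _ = ∫⁻ t in Ioi (0:ℝ), ∫⁻ s,
            (if ENNReal.ofReal t < s then ENNReal.ofReal (u * Real.exp (-(u*t))) else 0) ∂ν := by
          apply lintegral_lintegral_swap
          apply Measurable.aemeasurable
          have hset : MeasurableSet {p : ℝ≥0∞ × ℝ | ENNReal.ofReal p.2 < p.1} :=
            measurableSet_lt (ENNReal.measurable_ofReal.comp measurable_snd) measurable_fst
          exact Measurable.ite hset ((hCcont.measurable).comp measurable_snd) measurable_const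
      _ = ∫⁻ t in Ioi (0:ℝ), ENNReal.ofReal (u * Real.exp (-(u*t)))
            * ENNReal.ofReal (Finv (Real.exp (-t))) := by
          refine setLIntegral_congr_fun measurableSet_Ioi (fun t ht => ?_)
          have hAm : MeasurableSet {s : ℝ≥0∞ | ENNReal.ofReal t < s} := measurableSet_Ioi
          have hind : (fun s : ℝ≥0∞ => if ENNReal.ofReal t < s
                then ENNReal.ofReal (u * Real.exp (-(u*t))) else 0)
              = {s : ℝ≥0∞ | ENNReal.ofReal t < s}.indicator
                  (fun _ => ENNReal.ofReal (u * Real.exp (-(u*t)))) := by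
            ext s; rw [Set.indicator_apply]; rfl
          rw [hind, lintegral_indicator_const hAm, hν t ht]
  rw [hL, hR]
end

section
/- The measure ν_F satisfies the Lévy integrability condition ∫₀^1 x ν_F(dx) < ∞; in fact ∫₀^1 x ν_F(dx) ≤ 2∫₀^∞ (1−F(x)) dx < ∞. -/
open MeasureTheory Set Filter
open scoped ENNReal NNReal

/-- The measure `ν_F` (on `(0,∞]`, with survival function
`ν_F((t,∞]) = F⁻¹(e^{−t})`) satisfies the Lévy integrability condition
`∫₀^1 x ν_F(dx) < ∞`; in fact `∫₀^1 x ν_F(dx) ≤ 2 ∫₀^∞ (1 − F(x)) dx < ∞`. -/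
theorem levy_measure_integrability
    (F : ℝ → ℝ)
    (hF_mono : Monotone F)
    (hF_rc : ∀ a : ℝ, ContinuousWithinAt F (Ici a) a)
    (hF_nonneg : ∀ x, 0 ≤ F x)
    (hF_le_one : ∀ x, F x ≤ 1)
    (hF_neg : ∀ x < 0, F x = 0)
    (hF_lim : Tendsto F atTop (nhds 1))
    (hF_mean : IntegrableOn (fun x => 1 - F x) (Ioi 0))
    (Finv : ℝ → ℝ) (hFinv : ∀ x, Finv x = sInf {s : ℝ | 0 < s ∧ x ≤ F s})
    (ν : Measure ℝ≥0∞)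
    (hν0 : ν {0} = 0)
    (hν : ∀ t : ℝ, 0 < t →
      ν {x : ℝ≥0∞ | ENNReal.ofReal t < x} = ENNReal.ofReal (Finv (Real.exp (-t)))) :
    (∫⁻ x in {x : ℝ≥0∞ | 0 < x ∧ x ≤ 1}, x ∂ν)
        ≤ 2 * ∫⁻ x in Ioi (0 : ℝ), ENNReal.ofReal (1 - F x) ∧
      2 * (∫⁻ x in Ioi (0 : ℝ), ENNReal.ofReal (1 - F x)) < ⊤ := by
  -- basic facts about Finv
  have hFinv_nonneg : ∀ u, 0 ≤ Finv u := by
    intro u; rw [hFinv]; exact Real.sInf_nonneg fun s hs => hs.1.le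
  have hFinv_le : ∀ u x, 0 < x → u ≤ F x → Finv u ≤ x := by
    intro u x hx hux
    rw [hFinv]
    exact csInf_le ⟨0, fun s hs => hs.1.le⟩ ⟨hx, hux⟩
  have hGal : ∀ u x, 0 < x → x < Finv u → F x < u := by
    intro u x hx hlt
    by_contra h
    exact absurd (hFinv_le u x hx (not_lt.mp h)) (not_le.mpr hlt)
  -- finiteness of the right-hand side
  have hfin : (∫⁻ x in Ioi (0 : ℝ), ENNReal.ofReal (1 - F x)) < ⊤ := by
    have h := hF_mean.hasFiniteIntegral
    rwa [hasFiniteIntegral_iff_ofReal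
      (Eventually.of_forall fun x => by simp only [Pi.zero_apply]; linarith [hF_le_one x])] at h
  have hfin2 : 2 * (∫⁻ x in Ioi (0 : ℝ), ENNReal.ofReal (1 - F x)) < ⊤ :=
    ENNReal.mul_lt_top (by norm_num) hfin
  refine ⟨?_, hfin2⟩
  set S : Set ℝ≥0∞ := {x : ℝ≥0∞ | 0 < x ∧ x ≤ 1} with hS
  have hSmeas : MeasurableSet S := by
    have : S = Ioc (0 : ℝ≥0∞) 1 := rfl
    rw [this]; exact measurableSet_Ioc
  -- rewrite the integrand on S
  have step1 : (∫⁻ x in S, x ∂ν) = ∫⁻ x in S, ENNReal.ofReal x.toReal ∂ν := by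
    refine setLIntegral_congr_fun hSmeas ?_
    intro x hx
    exact (ENNReal.ofReal_toReal (ne_top_of_le_ne_top ENNReal.one_ne_top hx.2)).symm
  -- layer cake on the left
  have step2 : (∫⁻ x in S, ENNReal.ofReal x.toReal ∂ν)
      = ∫⁻ t in Ioi (0 : ℝ), (ν.restrict S) {a : ℝ≥0∞ | t < a.toReal} :=
    lintegral_eq_lintegral_meas_lt (ν.restrict S)
      (Eventually.of_forall fun x => ENNReal.toReal_nonneg)
      ENNReal.measurable_toReal.aemeasurable
  -- the bound function
  set B : ℝ → ℝ≥0∞ := fun t =>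
    if t < 1 then ENNReal.ofReal (Finv (Real.exp (-t))) else 0 with hB
  have step3 : (∫⁻ t in Ioi (0 : ℝ), (ν.restrict S) {a : ℝ≥0∞ | t < a.toReal})
      ≤ ∫⁻ t in Ioi (0 : ℝ), B t := by
    refine lintegral_mono_ae ?_
    rw [ae_restrict_iff' measurableSet_Ioi]
    filter_upwards with t ht
    have hmeas : MeasurableSet {a : ℝ≥0∞ | t < a.toReal} :=
      ENNReal.measurable_toReal measurableSet_Ioi
    rw [Measure.restrict_apply hmeas]
    by_cases h1 : t < 1
    · have hsub : {a : ℝ≥0∞ | t < a.toReal} ∩ S ⊆ {x : ℝ≥0∞ | ENNReal.ofReal t < x} := by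
        rintro a ⟨hta, h0a, ha1⟩
        have hne : a ≠ ⊤ := ne_top_of_le_ne_top ENNReal.one_ne_top ha1
        exact (ENNReal.ofReal_lt_iff_lt_toReal (le_of_lt ht) hne).mpr hta
      calc ν ({a : ℝ≥0∞ | t < a.toReal} ∩ S)
          ≤ ν {x : ℝ≥0∞ | ENNReal.ofReal t < x} := measure_mono hsub
        _ = ENNReal.ofReal (Finv (Real.exp (-t))) := hν t ht
        _ = B t := by rw [hB]; simp [h1]
    · have hempty : {a : ℝ≥0∞ | t < a.toReal} ∩ S = ∅ := by
        ext a
        simp only [mem_inter_iff, mem_empty_iff_false, iff_false, not_and, mem_setOf_eq]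
        intro hta ⟨h0a, ha1⟩
        have : a.toReal ≤ 1 := by
          calc a.toReal ≤ (1 : ℝ≥0∞).toReal := ENNReal.toReal_mono ENNReal.one_ne_top ha1
            _ = 1 := by simp
        linarith [not_lt.mp h1]
      rw [hempty]
      simp
  -- layer cake on the right
  have hf2me : Measurable fun x : ℝ => 2 * (1 - F x) :=
    (measurable_const.sub hF_mono.measurable).const_mul 2
  have step5 : (∫⁻ x in Ioi (0 : ℝ), ENNReal.ofReal (2 * (1 - F x)))
      = ∫⁻ t in Ioi (0 : ℝ), (volume.restrict (Ioi (0 : ℝ))) {x : ℝ | t < 2 * (1 - F x)} :=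
    lintegral_eq_lintegral_meas_lt (volume.restrict (Ioi (0 : ℝ)))
      (Eventually.of_forall fun x => by simp only [Pi.zero_apply]; linarith [hF_le_one x])
      hf2me.aemeasurable
  -- compare B with the tail measures on the right
  have step4 : (∫⁻ t in Ioi (0 : ℝ), B t)
      ≤ ∫⁻ t in Ioi (0 : ℝ), (volume.restrict (Ioi (0 : ℝ))) {x : ℝ | t < 2 * (1 - F x)} := by
    refine lintegral_mono_ae ?_
    rw [ae_restrict_iff' measurableSet_Ioi]
    filter_upwards with t ht
    have ht0 : (0 : ℝ) < t := mem_Ioi.mp ht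
    by_cases h1 : t < 1
    · have hBt : B t = ENNReal.ofReal (Finv (Real.exp (-t))) := by rw [hB]; simp [h1]
      rw [hBt]
      have hmeas : MeasurableSet {x : ℝ | t < 2 * (1 - F x)} :=
        measurableSet_lt measurable_const hf2me
      rw [Measure.restrict_apply hmeas]
      have hexp : Real.exp (-t) ≤ 1 - t / 2 := by
        rw [Real.exp_neg]
        have h2 : t + 1 ≤ Real.exp t := Real.add_one_le_exp t
        have h3 : (0 : ℝ) < 1 + t := by linarith
        have h4 : (Real.exp t)⁻¹ ≤ (1 + t)⁻¹ :=
          inv_anti₀ h3 (by linarith)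
        have h5 : (1 + t)⁻¹ ≤ 1 - t / 2 := by
          rw [inv_le_iff_one_le_mul₀ h3]
          nlinarith [mul_nonneg ht0.le (by linarith : (0:ℝ) ≤ 1 - t)]
        linarith
      have hsub : Ioo (0 : ℝ) (Finv (Real.exp (-t)))
          ⊆ {x : ℝ | t < 2 * (1 - F x)} ∩ Ioi (0 : ℝ) := by
        rintro x ⟨hx0, hxlt⟩
        refine ⟨?_, hx0⟩
        have hFx : F x < Real.exp (-t) := hGal _ x hx0 hxlt
        have : F x < 1 - t / 2 := lt_of_lt_of_le hFx hexp
        simp only [mem_setOf_eq]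
        linarith
      calc ENNReal.ofReal (Finv (Real.exp (-t)))
          = volume (Ioo (0 : ℝ) (Finv (Real.exp (-t)))) := by
            rw [Real.volume_Ioo, sub_zero]
        _ ≤ volume ({x : ℝ | t < 2 * (1 - F x)} ∩ Ioi (0 : ℝ)) := measure_mono hsub
    · have : B t = 0 := by rw [hB]; simp [h1]
      rw [this]
      exact zero_le
  -- put everything together
  have step6 : (∫⁻ x in Ioi (0 : ℝ), ENNReal.ofReal (2 * (1 - F x)))
      = 2 * ∫⁻ x in Ioi (0 : ℝ), ENNReal.ofReal (1 - F x) := by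
    have : ∀ x : ℝ, ENNReal.ofReal (2 * (1 - F x)) = 2 * ENNReal.ofReal (1 - F x) := by
      intro x
      rw [ENNReal.ofReal_mul (by norm_num : (0 : ℝ) ≤ 2)]
      norm_num
    simp_rw [this]
    exact lintegral_const_mul' 2 _ ENNReal.ofNat_ne_top
  calc (∫⁻ x in S, x ∂ν)
      = ∫⁻ t in Ioi (0 : ℝ), (ν.restrict S) {a : ℝ≥0∞ | t < a.toReal} := by
        rw [step1, step2]
    _ ≤ ∫⁻ t in Ioi (0 : ℝ), B t := step3
    _ ≤ ∫⁻ t in Ioi (0 : ℝ), (volume.restrict (Ioi (0 : ℝ))) {x : ℝ | t < 2 * (1 - F x)} := step4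
    _ = ∫⁻ x in Ioi (0 : ℝ), ENNReal.ofReal (2 * (1 - F x)) := step5.symm
    _ = 2 * ∫⁻ x in Ioi (0 : ℝ), ENNReal.ofReal (1 - F x) := step6
end
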